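/- For p ∈ (0, 1/4) and f(x) = (1 − 4p + 4x)(1 − H(x/(1 − 4p + 4x))), the function f is strictly decreasing on (0, (1−4p)/(a₀ − 3)), where a₀ ≈ 11.4445 is the unique real root of a³ − 11a² − 5a − 1 = 0; consequently the minimizer of f over [0, p] is min{p, (1−4p)/(a₀ − 3)}. -/

import Mathlib

/-- Binary entropy function. -/
noncomputable def binEnt (x : ℝ) : ℝ :=
  -(x * Real.logb 2 x) - (1 - x) * Real.logb 2 (1 - x)

noncomputable def Faux (c x : ℝ) : ℝ :=
  (c + 4*x) + (x * Real.log x + (c+3*x) * Real.log (c+3*x)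
    - (c+4*x) * Real.log (c+4*x)) / Real.log 2

lemma Faux_cont (c : ℝ) : Continuous (Faux c) := by
  unfold Faux
  have h := Real.continuous_mul_log
  have h1 : Continuous fun x : ℝ => (c+3*x) * Real.log (c+3*x) :=
    h.comp (by continuity)
  have h2 : Continuous fun x : ℝ => (c+4*x) * Real.log (c+4*x) :=
    h.comp (by continuity)
  exact (continuous_const.add (continuous_const.mul continuous_id)).add
    (((h.add h1).sub h2).div_const _)

lemma Faux_deriv (c x : ℝ) (hc : 0 < c) (hx : 0 < x) :
    HasDerivAt (Faux c)
      (4 + (Real.log x + 3*Real.log (c+3*x) - 4*Real.log (c+4*x))/Real.log 2) x := by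
  have h1 : HasDerivAt (fun y : ℝ => c + 4*y) 4 x := by
    simpa using ((hasDerivAt_id x).const_mul (4:ℝ)).const_add c
  have h2 : HasDerivAt (fun y : ℝ => y * Real.log y) (Real.log x + 1) x :=
    Real.hasDerivAt_mul_log hx.ne'
  have h3lin : HasDerivAt (fun y : ℝ => c + 3*y) 3 x := by
    simpa using ((hasDerivAt_id x).const_mul (3:ℝ)).const_add c
  have h4lin : HasDerivAt (fun y : ℝ => c + 4*y) 4 x := h1
  have h3 : HasDerivAt (fun y : ℝ => (c+3*y) * Real.log (c+3*y))
      ((Real.log (c+3*x) + 1) * 3) x :=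
    HasDerivAt.comp (h₂ := fun y : ℝ => y * Real.log y) x
      (Real.hasDerivAt_mul_log (by linarith : (0:ℝ) < c+3*x).ne') h3lin
  have h4 : HasDerivAt (fun y : ℝ => (c+4*y) * Real.log (c+4*y))
      ((Real.log (c+4*x) + 1) * 4) x :=
    HasDerivAt.comp (h₂ := fun y : ℝ => y * Real.log y) x
      (Real.hasDerivAt_mul_log (by linarith : (0:ℝ) < c+4*x).ne') h4lin
  have htot := h1.add (((h2.add h3).sub h4).div_const (Real.log 2))
  refine (show HasDerivAt (Faux c) _ x from htot).congr_deriv ?_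
  have hL : Real.log 2 ≠ 0 := ne_of_gt (Real.log_pos (by norm_num))
  ring

lemma r_pos (a₀ a : ℝ) (hroot : a₀ ^ 3 - 11 * a₀ ^ 2 - 5 * a₀ - 1 = 0)
    (ha₀ : 11 < a₀) (ha : a₀ < a) : 0 < a^3 - 11*a^2 - 5*a - 1 := by
  nlinarith [mul_pos (show (0:ℝ) < a - a₀ by linarith)
    (show (0:ℝ) < a^2 + a*a₀ + a₀^2 - 11*a - 11*a₀ - 5 by nlinarith)]

lemma r_neg (a₀ a : ℝ)
    (huniq : ∀ b : ℝ, b ^ 3 - 11 * b ^ 2 - 5 * b - 1 = 0 → b = a₀)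
    (h3 : 3 < a) (ha : a < a₀) : a^3 - 11*a^2 - 5*a - 1 < 0 := by
  by_contra h
  push_neg at h
  rcases eq_or_lt_of_le h with heq | hlt
  · have := huniq a (by linarith)
    linarith
  · have hcont : ContinuousOn (fun b : ℝ => b^3 - 11*b^2 - 5*b - 1) (Set.Icc 3 a) := by
      fun_prop
    have hiv := intermediate_value_Icc h3.le hcont
    have h0 : (0:ℝ) ∈ Set.Icc ((fun b : ℝ => b^3 - 11*b^2 - 5*b - 1) 3)
        ((fun b : ℝ => b^3 - 11*b^2 - 5*b - 1) a) := by
      constructor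
      · norm_num
      · simpa using hlt.le
    obtain ⟨z, hz, hz0⟩ := hiv h0
    have hza := huniq z (by simpa using hz0)
    have : z ≤ a := hz.2
    linarith

theorem f_decreasing_and_minimizer (p a₀ : ℝ) (hp0 : 0 < p) (hp4 : p < 1/4)
    (hroot : a₀ ^ 3 - 11 * a₀ ^ 2 - 5 * a₀ - 1 = 0)
    (huniq : ∀ a : ℝ, a ^ 3 - 11 * a ^ 2 - 5 * a - 1 = 0 → a = a₀)
    (ha₀ : 11 < a₀) :
    StrictAntiOn (fun x : ℝ => (1 - 4*p + 4*x) * (1 - binEnt (x / (1 - 4*p + 4*x))))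
      (Set.Ico 0 ((1 - 4*p) / (a₀ - 3))) ∧
    ∀ x ∈ Set.Icc (0:ℝ) p,
      (fun x : ℝ => (1 - 4*p + 4*x) * (1 - binEnt (x / (1 - 4*p + 4*x))))
          (min p ((1 - 4*p) / (a₀ - 3)))
        ≤ (fun x : ℝ => (1 - 4*p + 4*x) * (1 - binEnt (x / (1 - 4*p + 4*x)))) x := by
  have hc : (0:ℝ) < 1 - 4*p := by linarith
  have ha3 : (0:ℝ) < a₀ - 3 := by linarith
  set x₀ : ℝ := (1 - 4*p) / (a₀ - 3) with hx₀def
  have hx₀ : 0 < x₀ := div_pos hc ha3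
  have hL : (0:ℝ) < Real.log 2 := Real.log_pos (by norm_num)
  -- the function agrees with Faux on [0, ∞)
  have hEq : ∀ x : ℝ, 0 ≤ x →
      (1 - 4*p + 4*x) * (1 - binEnt (x / (1 - 4*p + 4*x))) = Faux (1 - 4*p) x := by
    intro x hx
    rcases eq_or_lt_of_le hx with rfl | hx
    · simp [binEnt, Faux]
    · have hu : (0:ℝ) < 1 - 4*p + 4*x := by linarith
      have h1 : (1:ℝ) - x/(1 - 4*p + 4*x) = (1 - 4*p + 3*x)/(1 - 4*p + 4*x) := by
        field_simp
        ring
      have h3 : (0:ℝ) < 1 - 4*p + 3*x := by linarith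
      unfold binEnt Faux
      rw [h1]
      simp only [Real.logb]
      rw [Real.log_div hx.ne' hu.ne', Real.log_div h3.ne' hu.ne']
      field_simp
      ring
  -- key inequality on (0, x₀)
  have hkeyA : ∀ x : ℝ, 0 < x → x < x₀ →
      16*x*(1 - 4*p + 3*x)^3 < (1 - 4*p + 4*x)^4 := by
    intro x hx hxx
    set a : ℝ := (1 - 4*p)/x + 3 with hadef
    clear_value a
    have hxa : 1 - 4*p + 3*x = x*a := by
      rw [hadef]
      field_simp
    have haa : a₀ < a := by
      have h1 : x*(a₀-3) < 1 - 4*p := by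
        have := (lt_div_iff₀ ha3).mp hxx
        linarith
      have h2 : a₀ - 3 < (1 - 4*p)/x := (lt_div_iff₀ hx).mpr (by linarith)
      linarith [hadef.le, hadef.ge]
    have hr := r_pos a₀ a hroot ha₀ haa
    have key : 16*a^3 < (a+1)^4 := by
      nlinarith [mul_pos (show (0:ℝ) < a - 1 by linarith) hr]
    have h4 : 1 - 4*p + 4*x = x*a + x := by linarith
    rw [hxa, h4]
    nlinarith [mul_lt_mul_of_pos_left key (pow_pos hx 4)]
  -- key inequality on (x₀, ∞)
  have hkeyB : ∀ x : ℝ, x₀ < x →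
      (1 - 4*p + 4*x)^4 < 16*x*(1 - 4*p + 3*x)^3 := by
    intro x hxx
    have hx : 0 < x := lt_trans hx₀ hxx
    set a : ℝ := (1 - 4*p)/x + 3 with hadef
    clear_value a
    have hxa : 1 - 4*p + 3*x = x*a := by
      rw [hadef]
      field_simp
    have ha3' : 3 < a := by
      have : 0 < (1 - 4*p)/x := div_pos hc hx
      linarith [hadef.le, hadef.ge]
    have haa : a < a₀ := by
      have h1 : 1 - 4*p < x*(a₀-3) := by
        have := (div_lt_iff₀ ha3).mp hxx
        linarith
      have h2 : (1 - 4*p)/x < a₀ - 3 := (div_lt_iff₀ hx).mpr (by linarith)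
      linarith [hadef.le, hadef.ge]
    have hr := r_neg a₀ a huniq ha3' haa
    have key : (a+1)^4 < 16*a^3 := by
      nlinarith [mul_pos (show (0:ℝ) < a - 1 by linarith)
        (show (0:ℝ) < -(a^3 - 11*a^2 - 5*a - 1) by linarith)]
    have h4 : 1 - 4*p + 4*x = x*a + x := by linarith
    rw [hxa, h4]
    nlinarith [mul_lt_mul_of_pos_left key (pow_pos hx 4)]
  -- derivative sign
  have hderiv : ∀ x : ℝ, 0 < x → deriv (Faux (1 - 4*p)) x
      = 4 + (Real.log x + 3*Real.log (1 - 4*p+3*x) - 4*Real.log (1 - 4*p+4*x))/Real.log 2 := by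
    intro x hx
    exact (Faux_deriv (1 - 4*p) x hc hx).deriv
  have expand : ∀ x : ℝ, 0 < x →
      Real.log (16*x*(1 - 4*p + 3*x)^3) =
        4*Real.log 2 + Real.log x + 3*Real.log (1 - 4*p + 3*x) := by
    intro x hx
    have h3 : (0:ℝ) < 1 - 4*p + 3*x := by linarith
    rw [Real.log_mul (mul_ne_zero (by norm_num) hx.ne') (pow_ne_zero _ h3.ne'),
      Real.log_mul (by norm_num) hx.ne', Real.log_pow,
      show (16:ℝ) = 2^4 by norm_num, Real.log_pow]
    push_cast
    ring
  have hDneg : ∀ x ∈ interior (Set.Icc (0:ℝ) x₀), deriv (Faux (1 - 4*p)) x < 0 := by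
    rw [interior_Icc]
    intro x hx
    rw [hderiv x hx.1]
    have h3 : (0:ℝ) < 1 - 4*p + 3*x := by linarith [hx.1]
    have hlog := Real.log_lt_log
      (mul_pos (mul_pos (by norm_num : (0:ℝ) < 16) hx.1) (pow_pos h3 3))
      (hkeyA x hx.1 hx.2)
    rw [expand x hx.1, Real.log_pow] at hlog
    have hS : Real.log x + 3*Real.log (1 - 4*p+3*x) - 4*Real.log (1 - 4*p+4*x)
        < -(4*Real.log 2) := by push_cast at hlog; linarith
    have : (Real.log x + 3*Real.log (1 - 4*p+3*x) - 4*Real.log (1 - 4*p+4*x))/Real.log 2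
        < -4 := by rw [div_lt_iff₀ hL]; linarith
    linarith
  have hDpos : ∀ x ∈ interior (Set.Icc x₀ p), 0 < deriv (Faux (1 - 4*p)) x := by
    rw [interior_Icc]
    intro x hx
    have hxp : 0 < x := lt_trans hx₀ hx.1
    rw [hderiv x hxp]
    have h3 : (0:ℝ) < 1 - 4*p + 3*x := by linarith
    have h4p : (0:ℝ) < 1 - 4*p + 4*x := by linarith
    have hlog := Real.log_lt_log (pow_pos h4p 4) (hkeyB x hx.1)
    rw [expand x hxp, Real.log_pow] at hlog
    have hS : -(4*Real.log 2) < Real.log x + 3*Real.log (1 - 4*p+3*x)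
        - 4*Real.log (1 - 4*p+4*x) := by push_cast at hlog; linarith
    have : (-4:ℝ) < (Real.log x + 3*Real.log (1 - 4*p+3*x)
        - 4*Real.log (1 - 4*p+4*x))/Real.log 2 := by rw [lt_div_iff₀ hL]; linarith
    linarith
  have hanti : StrictAntiOn (Faux (1 - 4*p)) (Set.Icc 0 x₀) :=
    strictAntiOn_of_deriv_neg (convex_Icc _ _) (Faux_cont _).continuousOn hDneg
  have hmono : StrictMonoOn (Faux (1 - 4*p)) (Set.Icc x₀ p) :=
    strictMonoOn_of_deriv_pos (convex_Icc _ _) (Faux_cont _).continuousOn hDpos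
  constructor
  · intro x hx y hy hxy
    simp only
    rw [hEq x hx.1, hEq y hy.1]
    exact hanti ⟨hx.1, hx.2.le⟩ ⟨hy.1, hy.2.le⟩ hxy
  · intro x hx
    simp only
    rcases le_total p x₀ with h | h
    · rw [min_eq_left h, hEq p hp0.le, hEq x hx.1]
      exact hanti.antitoneOn ⟨hx.1, le_trans hx.2 h⟩ ⟨hp0.le, h⟩ hx.2
    · rw [min_eq_right h, hEq x₀ hx₀.le, hEq x hx.1]
      rcases le_total x x₀ with h2 | h2
      · exact hanti.antitoneOn ⟨hx.1, h2⟩ ⟨hx₀.le, le_refl _⟩ h2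
      · exact hmono.monotoneOn ⟨le_refl _, h⟩ ⟨h2, hx.2⟩ h2
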